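/- arXiv:1407.1293 — 2 statements merged into one kernel-verified Lean document; each statement's English description precedes it below -/
import Mathlib

section
/- For n ≥ 0 define φ_n(x) = ∫₀ˣ √(2n+1 - t²) dt. If |x|, |y| ≤ T ≤ √(2n+1)/2, then |φ_{n+1}(x) - φ_{n+1}(y) - φ_n(x) + φ_n(y)| ≤ 3 |x - y| / √(2n+1). -/
open MeasureTheory Real

/-- For `φ_n(x) = ∫₀ˣ √(2n+1 - t²) dt` and `|x|, |y| ≤ T ≤ √(2n+1)/2`:
`|φ_{n+1}(x) - φ_{n+1}(y) - φ_n(x) + φ_n(y)| ≤ 3|x - y|/√(2n+1)`. -/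
theorem stmt6 (n : ℕ)
    (φ : ℕ → ℝ → ℝ)
    (hφ : ∀ (m : ℕ) (x : ℝ), φ m x = ∫ t in (0:ℝ)..x, Real.sqrt (2 * (m : ℝ) + 1 - t ^ 2))
    (T x y : ℝ) (hT : 0 < T) (hT' : T ≤ Real.sqrt (2 * (n : ℝ) + 1) / 2)
    (hx : |x| ≤ T) (hy : |y| ≤ T) :
    |φ (n + 1) x - φ (n + 1) y - φ n x + φ n y|
      ≤ 3 * |x - y| / Real.sqrt (2 * (n : ℝ) + 1) := by
  set s := Real.sqrt (2 * (n : ℝ) + 1) with hsdef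
  have hs : 0 < s := Real.sqrt_pos.mpr (by positivity)
  have hs2 : s ^ 2 = 2 * (n : ℝ) + 1 := Real.sq_sqrt (by positivity)
  have hint : ∀ (m : ℕ) (a b : ℝ),
      IntervalIntegrable (fun t : ℝ => Real.sqrt (2 * (m : ℝ) + 1 - t ^ 2)) volume a b := by
    intro m a b
    exact (Real.continuous_sqrt.comp (by continuity)).intervalIntegrable a b
  have hsub : ∀ m : ℕ, IntervalIntegrable
      (fun t : ℝ => Real.sqrt (2 * ((m : ℝ) + 1) + 1 - t ^ 2)
        - Real.sqrt (2 * (m : ℝ) + 1 - t ^ 2)) volume y x := by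
    intro m
    have h1 := hint (m + 1) y x
    push_cast at h1
    exact h1.sub (hint m y x)
  have key : φ (n + 1) x - φ (n + 1) y - φ n x + φ n y
      = ∫ t in y..x, (Real.sqrt (2 * ((n : ℝ) + 1) + 1 - t ^ 2)
          - Real.sqrt (2 * (n : ℝ) + 1 - t ^ 2)) := by
    have e1 : (∫ t in (0:ℝ)..x, Real.sqrt (2 * ((n + 1 : ℕ) : ℝ) + 1 - t ^ 2))
        - (∫ t in (0:ℝ)..y, Real.sqrt (2 * ((n + 1 : ℕ) : ℝ) + 1 - t ^ 2))
        = ∫ t in y..x, Real.sqrt (2 * ((n + 1 : ℕ) : ℝ) + 1 - t ^ 2) :=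
      intervalIntegral.integral_interval_sub_left (hint (n + 1) 0 x) (hint (n + 1) 0 y)
    have e2 : (∫ t in (0:ℝ)..x, Real.sqrt (2 * (n : ℝ) + 1 - t ^ 2))
        - (∫ t in (0:ℝ)..y, Real.sqrt (2 * (n : ℝ) + 1 - t ^ 2))
        = ∫ t in y..x, Real.sqrt (2 * (n : ℝ) + 1 - t ^ 2) :=
      intervalIntegral.integral_interval_sub_left (hint n 0 x) (hint n 0 y)
    have h1 := hint (n + 1) y x
    have e3 := intervalIntegral.integral_sub h1 (hint n y x)
    rw [hφ, hφ, hφ, hφ]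
    push_cast at e1 e3 ⊢
    linarith [e1, e2, e3]
  rw [key]
  have hbound : ∀ t ∈ Set.uIoc y x,
      ‖Real.sqrt (2 * ((n : ℝ) + 1) + 1 - t ^ 2)
        - Real.sqrt (2 * (n : ℝ) + 1 - t ^ 2)‖ ≤ 3 / s := by
    intro t ht
    have ht' : t ∈ Set.uIcc y x := Set.uIoc_subset_uIcc ht
    have htT : |t| ≤ T := by
      rcases Set.mem_uIcc.mp ht' with ⟨h1, h2⟩ | ⟨h1, h2⟩ <;>
      · rw [abs_le] at hx hy ⊢
        constructor <;> linarith [hx.1, hx.2, hy.1, hy.2]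
    have ht2 : t ^ 2 ≤ T ^ 2 := by
      rw [abs_le] at htT; exact sq_le_sq' htT.1 htT.2
    have hT2 : T ^ 2 ≤ s ^ 2 / 4 := by nlinarith
    set a := 2 * (n : ℝ) + 1 - t ^ 2 with hadef
    have ha : 3 / 4 * s ^ 2 ≤ a := by nlinarith
    have ha0 : 0 ≤ a := by nlinarith
    have hroot : s / 3 ≤ Real.sqrt a := by
      have h := Real.sqrt_le_sqrt (show (s / 3) ^ 2 ≤ a by nlinarith)
      rwa [Real.sqrt_sq (by positivity)] at h
    have hsa : Real.sqrt a ^ 2 = a := Real.sq_sqrt ha0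
    have hupper : Real.sqrt (a + 2) ≤ Real.sqrt a + 3 / s := by
      have hu : 3 / s * s = 3 := by field_simp
      have h1 : Real.sqrt (a + 2) ≤ Real.sqrt ((Real.sqrt a + 3 / s) ^ 2) := by
        apply Real.sqrt_le_sqrt
        nlinarith [mul_nonneg (show (0:ℝ) ≤ 3 / s by positivity)
          (show (0:ℝ) ≤ 3 * Real.sqrt a - s by linarith), sq_nonneg (3 / s)]
      rwa [Real.sqrt_sq (by positivity)] at h1
    have hmono : Real.sqrt a ≤ Real.sqrt (a + 2) := Real.sqrt_le_sqrt (by linarith)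
    have heq : 2 * ((n : ℝ) + 1) + 1 - t ^ 2 = a + 2 := by ring
    rw [heq, Real.norm_eq_abs, abs_of_nonneg (by linarith)]
    linarith
  have h := intervalIntegral.norm_integral_le_of_norm_le_const hbound
  rw [Real.norm_eq_abs] at h
  calc |∫ t in y..x, (Real.sqrt (2 * ((n : ℝ) + 1) + 1 - t ^ 2)
          - Real.sqrt (2 * (n : ℝ) + 1 - t ^ 2))| ≤ 3 / s * |x - y| := h
    _ = 3 * |x - y| / s := by ring
end

section
/- For n ≥ 0 define φ_n(x) = ∫₀ˣ √(2n+1 - t²) dt. If |x|, |y| ≤ T ≤ √(2n+1)/2, then |φ_{n+1}(x) - φ_n(x) + φ_{n+1}(y) - φ_n(y)| ≤ 5T/√(2n+1). -/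
open MeasureTheory Real

/-- For `φ_n(x) = ∫₀ˣ √(2n+1 - t²) dt` and `|x|, |y| ≤ T ≤ √(2n+1)/2`:
`|φ_{n+1}(x) - φ_n(x) + φ_{n+1}(y) - φ_n(y)| ≤ 5T/√(2n+1)`. -/
theorem stmt7 (n : ℕ)
    (φ : ℕ → ℝ → ℝ)
    (hφ : ∀ (m : ℕ) (x : ℝ), φ m x = ∫ t in (0:ℝ)..x, Real.sqrt (2 * (m : ℝ) + 1 - t ^ 2))
    (T x y : ℝ) (hT : 0 < T) (hT' : T ≤ Real.sqrt (2 * (n : ℝ) + 1) / 2)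
    (hx : |x| ≤ T) (hy : |y| ≤ T) :
    |φ (n + 1) x - φ n x + φ (n + 1) y - φ n y|
      ≤ 5 * T / Real.sqrt (2 * (n : ℝ) + 1) := by
  set s := Real.sqrt (2 * (n : ℝ) + 1) with hs_def
  have hpos : (0:ℝ) < 2 * (n : ℝ) + 1 := by positivity
  have hs : 0 < s := Real.sqrt_pos.mpr hpos
  have hs2 : s ^ 2 = 2 * (n : ℝ) + 1 := Real.sq_sqrt hpos.le
  have key : ∀ z : ℝ, |z| ≤ T → |φ (n + 1) z - φ n z| ≤ 5 / (2 * s) * T := by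
    intro z hz
    have c1 : Continuous fun t : ℝ => Real.sqrt (2 * ((n : ℝ) + 1) + 1 - t ^ 2) := by
      fun_prop
    have c2 : Continuous fun t : ℝ => Real.sqrt (2 * (n : ℝ) + 1 - t ^ 2) := by
      fun_prop
    rw [hφ, hφ]
    push_cast
    rw [← intervalIntegral.integral_sub (c1.intervalIntegrable 0 z)
      (c2.intervalIntegrable 0 z)]
    have hbound : ∀ t ∈ Set.uIoc (0:ℝ) z,
        ‖Real.sqrt (2 * ((n : ℝ) + 1) + 1 - t ^ 2)
          - Real.sqrt (2 * (n : ℝ) + 1 - t ^ 2)‖ ≤ 5 / (2 * s) := by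
      intro t ht
      have h1 : -|z| ≤ t :=
        le_trans (le_min (neg_nonpos.mpr (abs_nonneg z)) (neg_abs_le z)) ht.1.le
      have h2 : t ≤ |z| := le_trans ht.2 (max_le (abs_nonneg z) (le_abs_self z))
      have ht2 : t ^ 2 ≤ T ^ 2 := by nlinarith [abs_nonneg z]
      have hT2 : T ^ 2 ≤ s ^ 2 / 4 := by nlinarith
      set u := Real.sqrt (2 * (n : ℝ) + 1 - t ^ 2) with hu_def
      set v := Real.sqrt (2 * ((n : ℝ) + 1) + 1 - t ^ 2) with hv_def
      have hA : (0:ℝ) ≤ 2 * (n : ℝ) + 1 - t ^ 2 := by nlinarith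
      have hu2 : u ^ 2 = 2 * (n : ℝ) + 1 - t ^ 2 := Real.sq_sqrt hA
      have hv2 : v ^ 2 = 2 * ((n : ℝ) + 1) + 1 - t ^ 2 := Real.sq_sqrt (by nlinarith)
      have hu0 : 0 ≤ u := Real.sqrt_nonneg _
      have hv0 : 0 ≤ v := Real.sqrt_nonneg _
      have huv : u ≤ v := Real.sqrt_le_sqrt (by nlinarith)
      rw [Real.norm_eq_abs, abs_of_nonneg (by linarith)]
      -- u^2 ≥ 3/4 * s^2, so 5u ≥ 2s
      have hu_lb : 2 * s ≤ 5 * u := by nlinarith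
      have h52 : 0 < 5 / (2 * s) := by positivity
      have hcu : 1 ≤ 5 / (2 * s) * u := by
        rw [div_mul_eq_mul_div, le_div_iff₀ (by positivity)]
        linarith
      have hsq : v ^ 2 ≤ (u + 5 / (2 * s)) ^ 2 := by
        nlinarith [sq_nonneg (5 / (2 * s))]
      have hfin : v ≤ u + 5 / (2 * s) := by
        have h := Real.sqrt_le_sqrt hsq
        rwa [Real.sqrt_sq hv0, Real.sqrt_sq (by positivity)] at h
      linarith
    have := intervalIntegral.norm_integral_le_of_norm_le_const hbound
    rw [Real.norm_eq_abs] at this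
    calc |∫ t in (0:ℝ)..z, (Real.sqrt (2 * ((n : ℝ) + 1) + 1 - t ^ 2)
          - Real.sqrt (2 * (n : ℝ) + 1 - t ^ 2))| ≤ 5 / (2 * s) * |z - 0| := this
      _ ≤ 5 / (2 * s) * T := by
          rw [sub_zero]
          exact mul_le_mul_of_nonneg_left hz (by positivity)
  have hX := key x hx
  have hY := key y hy
  have h5 : 5 / (2 * s) * T + 5 / (2 * s) * T = 5 * T / s := by
    field_simp; ring
  calc |φ (n + 1) x - φ n x + φ (n + 1) y - φ n y|
      ≤ |φ (n + 1) x - φ n x| + |φ (n + 1) y - φ n y| := by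
        have := abs_add_le (φ (n + 1) x - φ n x) (φ (n + 1) y - φ n y)
        calc |φ (n + 1) x - φ n x + φ (n + 1) y - φ n y|
            = |(φ (n + 1) x - φ n x) + (φ (n + 1) y - φ n y)| := by ring_nf
          _ ≤ _ := this
    _ ≤ 5 * T / s := by rw [← h5]; exact add_le_add hX hY
end
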